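/- Let q(\kappa, \sigma_w, \epsilon) be the probability that a vector w = (w_0,...,w_{d-1}) of i.i.d. N(0, \sigma_w^2) entries satisfies (1/2)((w_0 - \kappa)^2 + \sum_{i=1}^{d-1} w_i^2) \leq \epsilon^2. Then q satisfies the scaling property q(\kappa, \sigma_w, \epsilon) = q(1, \sigma_w/\kappa, \epsilon/\kappa) for all \kappa > 0, and the limit lim_{\epsilon \to 0} log(q(\kappa, \sigma_w, \epsilon)) / log(\epsilon) = d. -/

import Mathlib

open MeasureTheory ProbabilityTheory Filter

open Real
open scoped NNReal ENNReal

/-- The probability `q(κ, σ_w, ε)` that a vector of `d` i.i.d. `N(0, σ_w²)` entries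
satisfies `(1/2)((w₀ - κ)² + ∑_{i=1}^{d-1} wᵢ²) ≤ ε²`. -/
noncomputable def qProb (d : ℕ) (κ σw ε : ℝ) : ℝ :=
  ((Measure.pi fun _ : Fin d => gaussianReal 0 (σw ^ 2).toNNReal)
    {w : Fin d → ℝ |
      (1 / 2) * ∑ i, (w i - if (i : ℕ) = 0 then κ else 0) ^ 2 ≤ ε ^ 2}).toReal

lemma measurableSet_qSet (d : ℕ) (κ ε : ℝ) : MeasurableSet {w : Fin d → ℝ |
      (1 / 2) * ∑ i, (w i - if (i : ℕ) = 0 then κ else 0) ^ 2 ≤ ε ^ 2} := by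
  apply measurableSet_le _ measurable_const
  fun_prop

lemma gauss_Icc_upper (c r : ℝ) (v : ℝ≥0) (hv : v ≠ 0) (hr : 0 ≤ r) :
    gaussianReal 0 v (Set.Icc (c - r) (c + r))
      ≤ ENNReal.ofReal ((Real.sqrt (2 * Real.pi * v))⁻¹ * (2 * r)) := by
  rw [gaussianReal_apply_eq_integral 0 hv]
  apply ENNReal.ofReal_le_ofReal
  calc ∫ x in Set.Icc (c - r) (c + r), gaussianPDFReal 0 v x
      ≤ ∫ _ in Set.Icc (c - r) (c + r), (Real.sqrt (2 * Real.pi * v))⁻¹ := by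
        apply setIntegral_mono_on (integrable_gaussianPDFReal 0 v).integrableOn
          (integrableOn_const (by rw [Real.volume_Icc]; exact ENNReal.ofReal_ne_top))
          measurableSet_Icc
        intro x _
        rw [gaussianPDFReal]
        calc (√(2 * Real.pi * v))⁻¹ * Real.exp (-(x - 0)^2 / (2 * v))
            ≤ (√(2 * Real.pi * v))⁻¹ * 1 := by
              gcongr
              rw [Real.exp_le_one_iff, neg_div]
              exact neg_nonpos.2 (by positivity)
        _ = _ := mul_one _
    _ = (Real.sqrt (2 * Real.pi * v))⁻¹ * (2 * r) := by
        rw [setIntegral_const, measureReal_def, Real.volume_Icc, smul_eq_mul,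
          show c + r - (c - r) = 2 * r by ring, ENNReal.toReal_ofReal (by positivity)]
        ring

lemma gauss_Icc_lower (κ : ℝ) (hκ : 0 < κ) (c r : ℝ) (hc : |c| ≤ κ) (v : ℝ≥0) (hv : v ≠ 0)
    (hr : 0 ≤ r) (hr2 : r ≤ 2) :
    ENNReal.ofReal ((Real.sqrt (2 * Real.pi * v))⁻¹ * Real.exp (-(κ+2)^2 / (2*v)) * (2*r))
      ≤ gaussianReal 0 v (Set.Icc (c - r) (c + r)) := by
  rw [gaussianReal_apply_eq_integral 0 hv]
  apply ENNReal.ofReal_le_ofReal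
  have hvol : volume (Set.Icc (c-r) (c+r)) < ⊤ := by
    rw [Real.volume_Icc]; exact ENNReal.ofReal_lt_top
  calc (Real.sqrt (2 * Real.pi * v))⁻¹ * Real.exp (-(κ+2)^2 / (2*v)) * (2*r)
      = ∫ _ in Set.Icc (c - r) (c + r),
          (Real.sqrt (2 * Real.pi * v))⁻¹ * Real.exp (-(κ+2)^2 / (2*v)) := by
        rw [setIntegral_const, measureReal_def, Real.volume_Icc, smul_eq_mul,
          show c + r - (c - r) = 2 * r by ring, ENNReal.toReal_ofReal (by positivity)]
        ring
    _ ≤ ∫ x in Set.Icc (c - r) (c + r), gaussianPDFReal 0 v x := by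
        apply setIntegral_mono_on (integrableOn_const hvol.ne)
          (integrable_gaussianPDFReal 0 v).integrableOn measurableSet_Icc
        intro x hx
        rw [gaussianPDFReal]
        apply mul_le_mul_of_nonneg_left _ (by positivity)
        apply Real.exp_le_exp.2
        have hv' : (0:ℝ) < 2 * (v:ℝ) := by
          have : 0 < (v:ℝ) := by exact_mod_cast pos_iff_ne_zero.2 hv
          linarith
        rw [div_le_div_iff_of_pos_right hv', neg_le_neg_iff]
        have h1 : |x| ≤ κ + 2 := by
          rw [abs_le] at hc ⊢
          obtain ⟨h2, h3⟩ := hx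
          constructor <;> nlinarith
        calc (x - 0)^2 = |x|^2 := by rw [sub_zero, sq_abs]
        _ ≤ (κ+2)^2 := by nlinarith [abs_nonneg x]

lemma qProb_bounds (d : ℕ) (hd : 1 ≤ d) (κ σw : ℝ) (hκ : 0 < κ) (hσ : 0 < σw) :
    ∃ c₁ c₂ : ℝ, 0 < c₁ ∧ 0 < c₂ ∧ ∀ ε : ℝ, 0 < ε → ε ≤ 1 →
      c₁ * ε^d ≤ qProb d κ σw ε ∧ qProb d κ σw ε ≤ c₂ * ε^d := by
  set v : ℝ≥0 := (σw^2).toNNReal with hvdef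
  have hv : v ≠ 0 := by
    simp only [hvdef, ne_eq, Real.toNNReal_eq_zero, not_le]
    positivity
  have hvR : (0:ℝ) < (v:ℝ) := by exact_mod_cast pos_iff_ne_zero.2 hv
  set C : ℝ := (Real.sqrt (2 * Real.pi * v))⁻¹ with hCdef
  have hC : 0 < C := by
    rw [hCdef]
    have := Real.pi_pos
    positivity
  set δ : ℝ := C * Real.exp (-(κ+2)^2 / (2*v)) with hδdef
  have hδ : 0 < δ := by rw [hδdef]; positivity
  have hsd : (1:ℝ) ≤ Real.sqrt d := by
    rw [show (1:ℝ) = Real.sqrt 1 by simp]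
    exact Real.sqrt_le_sqrt (by exact_mod_cast hd)
  refine ⟨(δ * (2 * (Real.sqrt 2 / Real.sqrt d)))^d, (C * (2 * Real.sqrt 2))^d,
    by positivity, by positivity, fun ε hε hε1 => ?_⟩
  set m : Fin d → ℝ := fun i => if (i : ℕ) = 0 then κ else 0 with hmdef
  set S : Set (Fin d → ℝ) := {w : Fin d → ℝ | (1/2) * ∑ i, (w i - m i)^2 ≤ ε^2} with hSdef
  set μd := Measure.pi fun _ : Fin d => gaussianReal 0 v with hμdef
  have hμS_ne_top : μd S ≠ ⊤ := measure_ne_top _ _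
  have hq : qProb d κ σw ε = (μd S).toReal := rfl
  have hmabs : ∀ i, |m i| ≤ κ := by
    intro i
    rw [hmdef]
    by_cases h : (i:ℕ) = 0 <;> simp [h, abs_of_pos hκ, le_of_lt hκ]
  constructor
  · -- lower bound
    set r : ℝ := ε * (Real.sqrt 2 / Real.sqrt d) with hrdef
    have hr0 : 0 ≤ r := by positivity
    have hr2 : r ≤ 2 := by
      have h2 : Real.sqrt 2 / Real.sqrt d ≤ Real.sqrt 2 := by
        apply div_le_self (Real.sqrt_nonneg 2) hsd
      have hs2 : Real.sqrt 2 ≤ 2 := by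
        have h4 : Real.sqrt 4 = 2 := by
          rw [show (4:ℝ) = 2^2 by norm_num, Real.sqrt_sq (by norm_num : (0:ℝ) ≤ 2)]
        calc Real.sqrt 2 ≤ Real.sqrt 4 := Real.sqrt_le_sqrt (by norm_num)
          _ = 2 := h4
      calc r ≤ 1 * (Real.sqrt 2 / Real.sqrt d) := by
              apply mul_le_mul_of_nonneg_right hε1 (by positivity)
        _ ≤ 2 := by rw [one_mul]; linarith
    have hsub : (Set.pi Set.univ fun i => Set.Icc (m i - r) (m i + r)) ⊆ S := by
      intro w hw
      simp only [Set.mem_pi, Set.mem_univ, Set.mem_Icc, forall_true_left] at hw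
      simp only [hSdef, Set.mem_setOf_eq]
      have hsum : ∑ i, (w i - m i)^2 ≤ ∑ _i : Fin d, r^2 := by
        apply Finset.sum_le_sum
        intro i _
        have h1 := (hw i).1
        have h2 := (hw i).2
        nlinarith
      rw [Finset.sum_const, Finset.card_univ, Fintype.card_fin, nsmul_eq_mul] at hsum
      have hrsq : r^2 = ε^2 * (2 / d) := by
        rw [hrdef, mul_pow, div_pow, Real.sq_sqrt (by norm_num : (0:ℝ) ≤ 2),
          Real.sq_sqrt (by positivity : (0:ℝ) ≤ (d:ℝ))]
      have hd0 : (0:ℝ) < d := by exact_mod_cast hd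
      rw [hrsq] at hsum
      have : (d:ℝ) * (ε^2 * (2/d)) = 2 * ε^2 := by field_simp
      rw [this] at hsum
      linarith
    have hlow : ENNReal.ofReal ((δ * (2*r))^d) ≤ μd S := by
      calc ENNReal.ofReal ((δ * (2*r))^d)
          = ∏ _i : Fin d, ENNReal.ofReal (δ * (2*r)) := by
            rw [Finset.prod_const, Finset.card_univ, Fintype.card_fin,
              ← ENNReal.ofReal_pow (by positivity)]
        _ ≤ ∏ i : Fin d, gaussianReal 0 v (Set.Icc (m i - r) (m i + r)) := by
            apply Finset.prod_le_prod' 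
            intro i _
            have := gauss_Icc_lower κ hκ (m i) r (hmabs i) v hv hr0 hr2
            calc ENNReal.ofReal (δ * (2*r)) = ENNReal.ofReal (C * Real.exp (-(κ+2)^2 / (2*v)) * (2*r)) := by
                  rw [hδdef]
              _ ≤ _ := this
        _ = μd (Set.pi Set.univ fun i => Set.Icc (m i - r) (m i + r)) := by
            rw [hμdef, Measure.pi_pi]
        _ ≤ μd S := measure_mono hsub
    have := (ENNReal.ofReal_le_iff_le_toReal hμS_ne_top).1 hlow
    rw [hq]
    calc (δ * (2 * (Real.sqrt 2 / Real.sqrt d)))^d * ε^d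
        = (δ * (2*r))^d := by rw [← mul_pow, hrdef]; ring_nf
      _ ≤ (μd S).toReal := this
  · -- upper bound
    set r : ℝ := Real.sqrt 2 * ε with hrdef
    have hr0 : 0 ≤ r := by positivity
    have hsub : S ⊆ Set.pi Set.univ fun i => Set.Icc (m i - r) (m i + r) := by
      intro w hw
      simp only [hSdef, Set.mem_setOf_eq] at hw
      simp only [Set.mem_pi, Set.mem_univ, Set.mem_Icc, forall_true_left]
      intro i
      have hterm : (w i - m i)^2 ≤ 2 * ε^2 := by
        have hle : (w i - m i)^2 ≤ ∑ j, (w j - m j)^2 :=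
          Finset.single_le_sum (f := fun j => (w j - m j)^2) (fun j _ => sq_nonneg _) (Finset.mem_univ i)
        linarith
      have habs : |w i - m i| ≤ r := by
        rw [← Real.sqrt_sq_eq_abs, hrdef]
        calc Real.sqrt ((w i - m i)^2) ≤ Real.sqrt (2 * ε^2) := Real.sqrt_le_sqrt hterm
          _ = Real.sqrt 2 * ε := by
              rw [Real.sqrt_mul (by norm_num), Real.sqrt_sq (le_of_lt hε)]
      rw [abs_le] at habs
      constructor <;> linarith [habs.1, habs.2]
    have hup : μd S ≤ ENNReal.ofReal ((C * (2*r))^d) := by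
      calc μd S ≤ μd (Set.pi Set.univ fun i => Set.Icc (m i - r) (m i + r)) :=
            measure_mono hsub
        _ = ∏ i : Fin d, gaussianReal 0 v (Set.Icc (m i - r) (m i + r)) := by
            rw [hμdef, Measure.pi_pi]
        _ ≤ ∏ _i : Fin d, ENNReal.ofReal (C * (2*r)) := by
            apply Finset.prod_le_prod'
            intro i _
            exact gauss_Icc_upper (m i) r v hv hr0
        _ = ENNReal.ofReal ((C * (2*r))^d) := by
            rw [Finset.prod_const, Finset.card_univ, Fintype.card_fin,
              ← ENNReal.ofReal_pow (by positivity)]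
    rw [hq]
    calc (μd S).toReal ≤ (C * (2*r))^d := ENNReal.toReal_le_of_le_ofReal (by positivity) hup
      _ = (C * (2 * Real.sqrt 2))^d * ε^d := by rw [← mul_pow, hrdef]; ring_nf

lemma qProb_scaling (d : ℕ) (κ σw : ℝ) (hκ : 0 < κ) (hσ : 0 < σw) (ε : ℝ) :
    qProb d κ σw ε = qProb d 1 (σw / κ) (ε / κ) := by
  have hκ0 : κ ≠ 0 := ne_of_gt hκ
  set v : ℝ≥0 := (σw^2).toNNReal with hvdef
  set v' : ℝ≥0 := ((σw/κ)^2).toNNReal with hv'def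
  have hmap : ∀ _i : Fin d, MeasurePreserving (fun x : ℝ => κ * x)
      (gaussianReal 0 v') (gaussianReal 0 v) := by
    intro _
    refine ⟨measurable_const_mul κ, ?_⟩
    rw [show (fun x : ℝ => κ * x) = (κ * ·) from rfl, gaussianReal_map_const_mul, mul_zero]
    congr 1
    rw [← NNReal.coe_inj, NNReal.coe_mul, hv'def, hvdef,
      Real.coe_toNNReal _ (sq_nonneg _), Real.coe_toNNReal _ (sq_nonneg _)]
    show κ^2 * (σw/κ)^2 = σw^2
    field_simp
  have hMP : MeasurePreserving (fun (w : Fin d → ℝ) i => κ * w i)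
      (Measure.pi fun _ : Fin d => gaussianReal 0 v')
      (Measure.pi fun _ : Fin d => gaussianReal 0 v) :=
    measurePreserving_pi _ _ hmap
  have hS := measurableSet_qSet d κ ε
  have hpre := hMP.measure_preimage (s := {w : Fin d → ℝ |
      (1 / 2) * ∑ i, (w i - if (i : ℕ) = 0 then κ else 0) ^ 2 ≤ ε ^ 2}) hS.nullMeasurableSet
  have hsetEq : (fun (w : Fin d → ℝ) i => κ * w i) ⁻¹' {w : Fin d → ℝ |
        (1 / 2) * ∑ i, (w i - if (i : ℕ) = 0 then κ else 0) ^ 2 ≤ ε ^ 2}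
      = {w : Fin d → ℝ |
        (1 / 2) * ∑ i, (w i - if (i : ℕ) = 0 then (1:ℝ) else 0) ^ 2 ≤ (ε/κ) ^ 2} := by
    ext w
    simp only [Set.mem_preimage, Set.mem_setOf_eq]
    have hterm : ∀ i : Fin d, (κ * w i - if (i : ℕ) = 0 then κ else 0) ^ 2
        = κ^2 * (w i - if (i : ℕ) = 0 then (1:ℝ) else 0) ^ 2 := by
      intro i
      by_cases h : (i:ℕ) = 0 <;> simp only [h, if_true, if_false] <;> ring
    rw [Finset.sum_congr rfl (fun i _ => hterm i), ← Finset.mul_sum]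
    have hκ2 : (0:ℝ) < κ^2 := by positivity
    rw [div_pow]
    rw [le_div_iff₀ hκ2]
    constructor <;> intro h <;> nlinarith [h]
  unfold qProb
  rw [← hvdef, ← hv'def, ← hpre, hsetEq]

theorem stmt_19 (d : ℕ) (hd : 1 ≤ d) (κ σw : ℝ) (hκ : 0 < κ) (hσ : 0 < σw) :
    (∀ ε ∈ Set.Ioc (0:ℝ) 1, qProb d κ σw ε = qProb d 1 (σw / κ) (ε / κ)) ∧
    Tendsto (fun ε : ℝ => Real.log (qProb d κ σw ε) / Real.log ε)
      (nhdsWithin 0 (Set.Ioi 0)) (nhds (d : ℝ)) := by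
  constructor
  · exact fun ε _ => qProb_scaling d κ σw hκ hσ ε
  · obtain ⟨c₁, c₂, hc₁, hc₂, hbounds⟩ := qProb_bounds d hd κ σw hκ hσ
    have hev : ∀ᶠ ε in nhdsWithin (0:ℝ) (Set.Ioi 0), ε ∈ Set.Ioo (0:ℝ) 1 :=
      Ioo_mem_nhdsGT_of_mem ⟨le_refl 0, zero_lt_one⟩
    have hloginv : Tendsto (fun ε : ℝ => (Real.log ε)⁻¹) (nhdsWithin 0 (Set.Ioi 0)) (nhds 0) := by
      have h1 : Tendsto (fun ε : ℝ => (-Real.log ε)⁻¹) (nhdsWithin 0 (Set.Ioi 0)) (nhds 0) :=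
        tendsto_inv_atTop_zero.comp
          (tendsto_neg_atBot_atTop.comp Real.tendsto_log_nhdsGT_zero)
      have := h1.neg
      simpa [inv_neg] using this
    have hlim : ∀ c : ℝ, Tendsto (fun ε : ℝ => Real.log c * (Real.log ε)⁻¹ + d)
        (nhdsWithin 0 (Set.Ioi 0)) (nhds (d : ℝ)) := by
      intro c
      have := (hloginv.const_mul (Real.log c)).add_const (d : ℝ)
      simpa using this
    apply tendsto_of_tendsto_of_tendsto_of_le_of_le' (hlim c₂) (hlim c₁)
    · filter_upwards [hev] with ε hε
      obtain ⟨hε0, hε1⟩ := hε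
      obtain ⟨hlow, hup⟩ := hbounds ε hε0 (le_of_lt hε1)
      have hq0 : 0 < qProb d κ σw ε := lt_of_lt_of_le (by positivity) hlow
      have hlogε : Real.log ε < 0 := Real.log_neg hε0 hε1
      have h2 : Real.log (qProb d κ σw ε) ≤ Real.log c₂ + d * Real.log ε := by
        calc Real.log (qProb d κ σw ε) ≤ Real.log (c₂ * ε^d) := Real.log_le_log hq0 hup
          _ = Real.log c₂ + d * Real.log ε := by
            rw [Real.log_mul (ne_of_gt hc₂) (by positivity), Real.log_pow]
      calc Real.log c₂ * (Real.log ε)⁻¹ + d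
          = (Real.log c₂ + d * Real.log ε) / Real.log ε := by
            rw [add_div, mul_div_assoc, div_self (ne_of_lt hlogε), mul_one, div_eq_mul_inv]
        _ ≤ Real.log (qProb d κ σw ε) / Real.log ε :=
            div_le_div_of_nonpos_of_le (le_of_lt hlogε) h2
    · filter_upwards [hev] with ε hε
      obtain ⟨hε0, hε1⟩ := hε
      obtain ⟨hlow, hup⟩ := hbounds ε hε0 (le_of_lt hε1)
      have hq0 : 0 < qProb d κ σw ε := lt_of_lt_of_le (by positivity) hlow
      have hlogε : Real.log ε < 0 := Real.log_neg hε0 hε1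
      have h1 : Real.log c₁ + d * Real.log ε ≤ Real.log (qProb d κ σw ε) := by
        calc Real.log c₁ + d * Real.log ε = Real.log (c₁ * ε^d) := by
              rw [Real.log_mul (ne_of_gt hc₁) (by positivity), Real.log_pow]
          _ ≤ Real.log (qProb d κ σw ε) := Real.log_le_log (by positivity) hlow
      calc Real.log (qProb d κ σw ε) / Real.log ε
          ≤ (Real.log c₁ + d * Real.log ε) / Real.log ε :=
            div_le_div_of_nonpos_of_le (le_of_lt hlogε) h1
        _ = Real.log c₁ * (Real.log ε)⁻¹ + d := by
            rw [add_div, mul_div_assoc, div_self (ne_of_lt hlogε), mul_one, div_eq_mul_inv]
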